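/- If a CI-structure G ⊆ A_E satisfies (MCI): for all disjoint i, j, ℓ, K, L, if (ij|K) ∉ G then (iℓ|jKL) ∈ G, and (SG): if (ij|K) ∈ G and (iℓ|jK) ∈ G then (iℓ|K) ∈ G and (ij|ℓK) ∈ G, then the function r : 2^E → ℕ defined recursively by r(∅) = 0, r({i}) = 1, and r(ijK) = r(iK) + r(jK) − r(K) if (ij|K) ∈ G, r(ijK) = r(iK) + r(jK) − r(K) − 1 if (ij|K) ∉ G, is well-defined (independent of the order of recursion) and is the rank function of a loopless matroid on E. -/

import Mathlib

open Finset

/-- A matroid on a finite ground set `E`, given by its rank function. -/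
structure FinMatroid (α : Type*) [DecidableEq α] where
  E : Finset α
  r : Finset α → ℕ
  r_empty : r ∅ = 0
  r_le_card : ∀ ⦃A⦄, A ⊆ E → r A ≤ A.card
  r_mono : ∀ ⦃A B : Finset α⦄, A ⊆ B → B ⊆ E → r A ≤ r B
  r_submod : ∀ ⦃A B : Finset α⦄, A ⊆ E → B ⊆ E → r (A ∪ B) + r (A ∩ B) ≤ r A + r B

namespace FinMatroid

variable {α : Type*} [DecidableEq α]

/-- A set is independent if it is subcardinal-tight for the rank function. -/
def Indep (M : FinMatroid α) (S : Finset α) : Prop := S ⊆ M.E ∧ M.r S = S.card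

/-- A circuit is a minimal dependent set. -/
def Circuit (M : FinMatroid α) (C : Finset α) : Prop :=
  C ⊆ M.E ∧ M.r C < C.card ∧ ∀ S, S ⊂ C → M.r S = S.card

/-- `B` is a basis of `S` if it is a maximal independent subset of `S`. -/
def BasisOf (M : FinMatroid α) (B S : Finset α) : Prop :=
  B ⊆ S ∧ M.Indep B ∧ ∀ x ∈ S, x ∉ B → ¬ M.Indep (insert x B)

/-- The conditional independence statement `(ij|K)` holds in `M`:
`r(iK) + r(jK) = r(ijK) + r(K)`. -/
def CI (M : FinMatroid α) (i j : α) (K : Finset α) : Prop :=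
  M.r (insert i K) + M.r (insert j K) = M.r (insert i (insert j K)) + M.r K

/-- A matroid is loopless if every singleton of the ground set is independent. -/
def Loopless (M : FinMatroid α) : Prop := ∀ e ∈ M.E, M.r {e} = 1

end FinMatroid

/-- Well-formedness of a CI-statement `(ij|K)` on ground set `E`. -/
def wfCI {α : Type*} [DecidableEq α] (E : Finset α) (i j : α) (K : Finset α) : Prop :=
  i ∈ E ∧ j ∈ E ∧ i ≠ j ∧ i ∉ K ∧ j ∉ K ∧ K ⊆ E

/-- The CI-structure `[[M]]` of a matroid, as a predicate on CI-statements. -/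
def FinMatroid.ciOf {α : Type*} [DecidableEq α] (M : FinMatroid α) :
    α → α → Finset α → Prop :=
  fun i j K => wfCI M.E i j K ∧ M.CI i j K

/-- Well-formedness of the data `i, j, ℓ, K` of an inference-rule instance:
`i, j, ℓ` are pairwise distinct elements of `E` and `K ⊆ E` is disjoint
from them. -/
def wf3 {α : Type*} [DecidableEq α] (E : Finset α) (i j ℓ : α) (K : Finset α) : Prop :=
  i ∈ E ∧ j ∈ E ∧ ℓ ∈ E ∧ i ≠ j ∧ i ≠ ℓ ∧ j ≠ ℓ ∧
    i ∉ K ∧ j ∉ K ∧ ℓ ∉ K ∧ K ⊆ E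

/-- A CI-structure on `E`: a (symmetric) set of well-formed CI-statements. -/
def IsCIStructOn {α : Type*} [DecidableEq α] (E : Finset α)
    (G : α → α → Finset α → Prop) : Prop :=
  (∀ i j K, G i j K → wfCI E i j K) ∧ (∀ i j K, G i j K → G j i K)

/-- The axiom (MCI): `(ij|K) ∉ G` implies `(iℓ|jKL) ∈ G`. -/
def MCIax {α : Type*} [DecidableEq α] (E : Finset α)
    (G : α → α → Finset α → Prop) : Prop :=
  ∀ i j ℓ K L, wf3 E i j ℓ K →
    L ⊆ E \ (insert i (insert j (insert ℓ K))) →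
    ¬ G i j K → G i ℓ (insert j (K ∪ L))

/-- The semigraphoid axiom (SG): `(ij|K) ∈ G` and `(iℓ|jK) ∈ G` imply
`(iℓ|K) ∈ G` and `(ij|ℓK) ∈ G`. -/
def SGax {α : Type*} [DecidableEq α] (E : Finset α)
    (G : α → α → Finset α → Prop) : Prop :=
  ∀ i j ℓ K, wf3 E i j ℓ K →
    G i j K → G i ℓ (insert j K) → G i ℓ K ∧ G i j (insert ℓ K)

/-- The recursion for the rank function of the matroid of a CI-structure:
`r(∅) = 0`, `r` of singletons is `1`, and
`r(ijK) = r(iK) + r(jK) - r(K)` if `(ij|K) ∈ G`, one less otherwise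
(written additively to avoid truncated subtraction). -/
def RecSat {α : Type*} [DecidableEq α] (E : Finset α)
    (G : α → α → Finset α → Prop) (r : Finset α → ℕ) : Prop :=
  r ∅ = 0 ∧ (∀ i ∈ E, r {i} = 1) ∧
    ∀ i j K, wfCI E i j K →
      (G i j K →
        r (insert i (insert j K)) + r K = r (insert i K) + r (insert j K)) ∧
      (¬ G i j K →
        r (insert i (insert j K)) + r K + 1 = r (insert i K) + r (insert j K))


section AuxCI

variable {α : Type*} [DecidableEq α]

/-- indicator of failure of `(ij|K)` -/
noncomputable def fG (G : α → α → Finset α → Prop) (i j : α) (K : Finset α) : ℕ :=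
  @ite _ (G i j K) (Classical.propDecidable _) 0 1

lemma fG_le_one (G : α → α → Finset α → Prop) (i j : α) (K : Finset α) :
    fG G i j K ≤ 1 := by
  unfold fG; split <;> omega

lemma fG_of_pos {G : α → α → Finset α → Prop} {i j : α} {K : Finset α}
    (h : G i j K) : fG G i j K = 0 := by unfold fG; exact if_pos h

lemma fG_of_neg {G : α → α → Finset α → Prop} {i j : α} {K : Finset α}
    (h : ¬ G i j K) : fG G i j K = 1 := by unfold fG; exact if_neg h

/-- nullity increment of adding `i` to the set built from the list `l`
(elements of `l` added from right to left). -/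
noncomputable def DD (G : α → α → Finset α → Prop) (i : α) : List α → ℕ
  | [] => 0
  | a :: l => DD G i l + fG G i a l.toFinset

/-- nullity of the list `l`. -/
noncomputable def NN (G : α → α → Finset α → Prop) : List α → ℕ
  | [] => 0
  | a :: l => NN G l + DD G a l

/-- nullity of a finset. -/
noncomputable def nF (G : α → α → Finset α → Prop) (S : Finset α) : ℕ :=
  NN G S.toList

variable {E : Finset α} {G : α → α → Finset α → Prop}

lemma perm_toFinset {l l' : List α} (h : l.Perm l') : l.toFinset = l'.toFinset := by
  ext x; simp [List.mem_toFinset, h.mem_iff]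

lemma fG_comm (hG : IsCIStructOn E G) (i j : α) (K : Finset α) :
    fG G i j K = fG G j i K := by
  by_cases h : G i j K
  · rw [fG_of_pos h, fG_of_pos (hG.2 _ _ _ h)]
  · rw [fG_of_neg h, fG_of_neg (fun h' => h (hG.2 _ _ _ h'))]

lemma wf3_swap {i x y : α} {K : Finset α} (h : wf3 E i x y K) : wf3 E i y x K := by
  obtain ⟨hi, hx, hy, hix, hiy, hxy, hiK, hxK, hyK, hKE⟩ := h
  exact ⟨hi, hy, hx, hiy, hix, hxy.symm, hiK, hyK, hxK, hKE⟩

/-- the key exchange identity (**) -/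
lemma star (hG : IsCIStructOn E G) (hMCI : MCIax E G) (hSG : SGax E G)
    {i x y : α} {K : Finset α} (h : wf3 E i x y K) :
    fG G i x K + fG G i y (insert x K) = fG G i y K + fG G i x (insert y K) := by
  have h' : wf3 E i y x K := wf3_swap h
  have m1 : ¬ G i x K → G i y (insert x K) := fun hn => by
    have := hMCI i x y K ∅ h (empty_subset _) hn
    simpa using this
  have m2 : ¬ G i y K → G i x (insert y K) := fun hn => by
    have := hMCI i y x K ∅ h' (empty_subset _) hn
    simpa using this
  have s1 := hSG i x y K h
  have s2 := hSG i y x K h'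
  by_cases hA : G i x K <;> by_cases hB : G i y K <;>
    by_cases hP : G i x (insert y K) <;> by_cases hQ : G i y (insert x K) <;>
    simp only [fG_of_pos, fG_of_neg, hA, hB, hP, hQ, not_false_iff] <;>
    first
      | rfl
      | (exfalso; tauto)
      | (rw [fG_of_pos hA] <;> rw [fG_of_pos hB] <;> tauto)
      | tauto

end AuxCI
section Aux2
variable {α : Type*} [DecidableEq α] {E : Finset α} {G : α → α → Finset α → Prop}

set_option linter.unusedSectionVars false

lemma perm_inv (hG : IsCIStructOn E G) (hMCI : MCIax E G) (hSG : SGax E G)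
    {u v : List α} (hp : u.Perm v) :
    u.Nodup → (∀ x ∈ u, x ∈ E) →
    (NN G u = NN G v ∧ ∀ i, i ∈ E → i ∉ u → DD G i u = DD G i v) := by
  induction hp with
  | nil => exact fun _ _ => ⟨rfl, fun _ _ _ => rfl⟩
  | cons a h ih =>
    intro hnd hmem
    rename_i l l'
    have hal : a ∉ l := (List.nodup_cons.mp hnd).1
    obtain ⟨ihN, ihD⟩ := ih (List.nodup_cons.mp hnd).2
      (fun x hx => hmem x (List.mem_cons_of_mem a hx))
    have htf : l.toFinset = l'.toFinset := perm_toFinset h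
    constructor
    · show NN G l + DD G a l = NN G l' + DD G a l'
      rw [ihN, ihD a (hmem a (List.mem_cons_self (a := a) (l := l))) hal]
    · intro i hi hil
      have hil' : i ∉ l := fun hc => hil (List.mem_cons_of_mem a hc)
      show DD G i l + fG G i a l.toFinset = DD G i l' + fG G i a l'.toFinset
      rw [ihD i hi hil', htf]
  | swap x y l =>
    intro hnd hmem
    have hyxl : y ∉ x :: l := (List.nodup_cons.mp hnd).1
    have hnd' := (List.nodup_cons.mp hnd).2
    have hxl : x ∉ l := (List.nodup_cons.mp hnd').1
    have hndl : l.Nodup := (List.nodup_cons.mp hnd').2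
    have hyl : y ∉ l := fun hc => hyxl (List.mem_cons_of_mem x hc)
    have hyx : y ≠ x := fun hc => hyxl (hc ▸ List.mem_cons_self (a := x) (l := l))
    have hxE : x ∈ E := hmem x (by simp)
    have hyE : y ∈ E := hmem y (by simp)
    have hlE : ∀ z ∈ l, z ∈ E := fun z hz => hmem z (by simp [hz])
    constructor
    · show NN G l + DD G x l + (DD G y l + fG G y x l.toFinset)
        = NN G l + DD G y l + (DD G x l + fG G x y l.toFinset)
      rw [fG_comm hG x y]; omega
    · intro i hi hil
      have hix : i ≠ x := fun hc => hil (by simp [hc])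
      have hiy : i ≠ y := fun hc => hil (by simp [hc])
      have hil' : i ∉ l := fun hc => hil (by simp [hc])
      have hwf : wf3 E i x y l.toFinset :=
        ⟨hi, hxE, hyE, hix, hiy, fun h => hyx h.symm,
          by simp [hil'], by simp [hxl], by simp [hyl],
          fun z hz => hlE z (List.mem_toFinset.mp hz)⟩
      have hst := star hG hMCI hSG hwf
      show DD G i l + fG G i x l.toFinset + fG G i y (x :: l).toFinset
        = DD G i l + fG G i y l.toFinset + fG G i x (y :: l).toFinset
      rw [List.toFinset_cons, List.toFinset_cons]
      omega
  | trans h1 h2 ih1 ih2 =>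
    intro hnd hmem
    rename_i l₁ l₂ l₃
    have hnd2 : l₂.Nodup := h1.nodup_iff.mp hnd
    have hmem2 : ∀ x ∈ l₂, x ∈ E := fun x hx => hmem x (h1.mem_iff.mpr hx)
    obtain ⟨N1, D1⟩ := ih1 hnd hmem
    obtain ⟨N2, D2⟩ := ih2 hnd2 hmem2
    exact ⟨N1.trans N2, fun i hi hil =>
      (D1 i hi hil).trans (D2 i hi (fun hc => hil (h1.mem_iff.mpr hc)))⟩

lemma nF_insert (hG : IsCIStructOn E G) (hMCI : MCIax E G) (hSG : SGax E G)
    {a : α} {T : Finset α} (ha : a ∈ E) (haT : a ∉ T) (hT : T ⊆ E) :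
    nF G (insert a T) = nF G T + DD G a T.toList := by
  have hperm : (insert a T).toList.Perm (a :: T.toList) := Finset.toList_insert haT
  have hmem : ∀ x ∈ (insert a T).toList, x ∈ E := by
    intro x hx
    rcases Finset.mem_insert.mp (Finset.mem_toList.mp hx) with h | h
    · exact h ▸ ha
    · exact hT h
  have := (perm_inv hG hMCI hSG hperm (Finset.nodup_toList _) hmem).1
  unfold nF
  rw [this]
  rfl

lemma nF_rec (hG : IsCIStructOn E G) (hMCI : MCIax E G) (hSG : SGax E G)
    {i j : α} {K : Finset α} (h : wfCI E i j K) :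
    nF G (insert i (insert j K)) + nF G K
      = nF G (insert i K) + nF G (insert j K) + fG G i j K := by
  obtain ⟨hi, hj, hij, hiK, hjK, hKE⟩ := h
  have e1 : nF G (insert j K) = nF G K + DD G j K.toList :=
    nF_insert hG hMCI hSG hj hjK hKE
  have e2 : nF G (insert i K) = nF G K + DD G i K.toList :=
    nF_insert hG hMCI hSG hi hiK hKE
  have hiI : i ∉ insert j K := by simp [hij, hiK]
  have e3 : nF G (insert i (insert j K))
      = nF G (insert j K) + DD G i (insert j K).toList :=
    nF_insert hG hMCI hSG hi hiI (Finset.insert_subset hj hKE)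
  have hperm : (insert j K).toList.Perm (j :: K.toList) := Finset.toList_insert hjK
  have hmem : ∀ x ∈ (insert j K).toList, x ∈ E := by
    intro x hx
    rcases Finset.mem_insert.mp (Finset.mem_toList.mp hx) with h | h
    · exact h ▸ hj
    · exact hKE h
  have e4 : DD G i (insert j K).toList = DD G i (j :: K.toList) :=
    (perm_inv hG hMCI hSG hperm (Finset.nodup_toList _) hmem).2 i hi
      (by simp [Finset.mem_toList, hij, hiK])
  have e5 : DD G i (j :: K.toList) = DD G i K.toList + fG G i j K := by
    show DD G i K.toList + fG G i j K.toList.toFinset = _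
    rw [Finset.toList_toFinset]
  omega

end Aux2
section Aux3
variable {α : Type*} [DecidableEq α] {E : Finset α} {G : α → α → Finset α → Prop}

set_option linter.unusedSectionVars false

lemma fail_prop (hMCI : MCIax E G) :
    ∀ (l : List α), l.Nodup → (∀ x ∈ l, x ∈ E) →
    ∀ i, i ∈ E → i ∉ l → 1 ≤ DD G i l →
    ∀ a, a ∈ E → a ∉ l → a ≠ i →
    ∀ L, L ⊆ E \ (insert i (insert a l.toFinset)) → G i a (l.toFinset ∪ L) := by
  intro l
  induction l with
  | nil => intro _ _ i _ _ hD; simp [DD] at hD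
  | cons b t ih =>
    intro hnd hmem i hi hil hD a ha hal hai L hL
    have hbt : b ∉ t := (List.nodup_cons.mp hnd).1
    have hndt : t.Nodup := (List.nodup_cons.mp hnd).2
    have hmemt : ∀ x ∈ t, x ∈ E := fun x hx => hmem x (List.mem_cons_of_mem b hx)
    have hbE : b ∈ E := hmem b (List.mem_cons_self (a := b) (l := t))
    have hit : i ∉ t := fun hc => hil (List.mem_cons_of_mem b hc)
    have hat : a ∉ t := fun hc => hal (List.mem_cons_of_mem b hc)
    have hib : i ≠ b := fun hc => hil (hc ▸ List.mem_cons_self (a := b) (l := t))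
    have hab : a ≠ b := fun hc => hal (hc ▸ List.mem_cons_self (a := b) (l := t))
    have hset : (b :: t).toFinset = insert b t.toFinset := List.toFinset_cons
    by_cases hb : G i b t.toFinset
    · -- the failure is deeper in `t`
      have hDt : 1 ≤ DD G i t := by
        have h0 : fG G i b t.toFinset = 0 := fG_of_pos hb
        have : DD G i (b :: t) = DD G i t + fG G i b t.toFinset := rfl
        omega
      have hsub : insert b L ⊆ E \ (insert i (insert a t.toFinset)) := by
        intro x hx
        rcases Finset.mem_insert.mp hx with h | h
        · subst h
          simp only [Finset.mem_sdiff, Finset.mem_insert, List.mem_toFinset]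
          exact ⟨hbE, by push_neg; exact ⟨fun hc => hib hc.symm, fun hc => hab hc.symm, hbt⟩⟩
        · have := hL h
          simp only [Finset.mem_sdiff, Finset.mem_insert, hset, List.mem_toFinset] at this ⊢
          tauto
      have := ih hndt hmemt i hi hit hDt a ha hat hai (insert b L) hsub
      rw [Finset.union_insert] at this
      rw [hset, Finset.insert_union]
      exact this
    · -- MCI applies directly
      have hwf : wf3 E i b a t.toFinset :=
        ⟨hi, hbE, ha, hib, fun hc => hai hc.symm, fun hc => hab hc.symm,
          by simp [hit], by simp [hbt], by simp [hat],
          fun z hz => hmemt z (List.mem_toFinset.mp hz)⟩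
      have hL' : L ⊆ E \ (insert i (insert b (insert a t.toFinset))) := by
        intro x hx
        have := hL hx
        simp only [Finset.mem_sdiff, Finset.mem_insert, hset, List.mem_toFinset] at this ⊢
        tauto
      have := hMCI i b a t.toFinset L hwf hL' hb
      rw [hset, Finset.insert_union]
      rwa [Finset.union_comm] at this ⊢
      
lemma DD_le_one (hMCI : MCIax E G) :
    ∀ (l : List α), l.Nodup → (∀ x ∈ l, x ∈ E) →
    ∀ i, i ∈ E → i ∉ l → DD G i l ≤ 1 := by
  intro l
  induction l with
  | nil => intro _ _ i _ _; simp [DD]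
  | cons b t ih =>
    intro hnd hmem i hi hil
    have hbt : b ∉ t := (List.nodup_cons.mp hnd).1
    have hndt : t.Nodup := (List.nodup_cons.mp hnd).2
    have hmemt : ∀ x ∈ t, x ∈ E := fun x hx => hmem x (List.mem_cons_of_mem b hx)
    have hit : i ∉ t := fun hc => hil (List.mem_cons_of_mem b hc)
    have hib : i ≠ b := fun hc => hil (hc ▸ List.mem_cons_self (a := b) (l := t))
    have hrfl : DD G i (b :: t) = DD G i t + fG G i b t.toFinset := rfl
    by_cases hD : 1 ≤ DD G i t
    · have := fail_prop hMCI t hndt hmemt i hi hit hD b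
        (hmem b (List.mem_cons_self (a := b) (l := t))) hbt (fun hc => hib hc.symm)
        ∅ (Finset.empty_subset _)
      rw [Finset.union_empty] at this
      have h0 : fG G i b t.toFinset = 0 := fG_of_pos this
      have := ih hndt hmemt i hi hit
      omega
    · have h1 := fG_le_one G i b t.toFinset
      omega

end Aux3
section Aux4
variable {α : Type*} [DecidableEq α] {E : Finset α} {G : α → α → Finset α → Prop}

set_option linter.unusedSectionVars false

lemma nF_empty : nF G (∅ : Finset α) = 0 := by
  unfold nF; rw [Finset.toList_empty]; rfl

lemma nF_singleton (a : α) : nF G ({a} : Finset α) = 0 := by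
  unfold nF; rw [Finset.toList_singleton]
  show NN G [] + DD G a [] = 0
  rfl

lemma nF_insert_le (hG : IsCIStructOn E G) (hMCI : MCIax E G) (hSG : SGax E G)
    {a : α} {T : Finset α} (ha : a ∈ E) (haT : a ∉ T) (hT : T ⊆ E) :
    nF G T ≤ nF G (insert a T) ∧ nF G (insert a T) ≤ nF G T + 1 := by
  rw [nF_insert hG hMCI hSG ha haT hT]
  have := DD_le_one hMCI T.toList (Finset.nodup_toList T)
    (fun x hx => hT (Finset.mem_toList.mp hx)) a ha (by simp [Finset.mem_toList, haT])
  omega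

lemma nF_le_card (hG : IsCIStructOn E G) (hMCI : MCIax E G) (hSG : SGax E G) :
    ∀ S : Finset α, S ⊆ E → nF G S ≤ S.card := by
  intro S
  induction S using Finset.induction_on with
  | empty => intro _; simp [nF_empty]
  | insert _ _ haT _ =>
    rename_i a T ih
    intro hS
    have ha : a ∈ E := hS (Finset.mem_insert_self a T)
    have hT : T ⊆ E := (Finset.subset_insert a T).trans hS
    have h2 := (nF_insert_le hG hMCI hSG ha haT hT).2
    have := ih hT
    rw [Finset.card_insert_of_notMem haT]
    omega

lemma nF_mono2 (hG : IsCIStructOn E G) (hMCI : MCIax E G) (hSG : SGax E G) :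
    ∀ (B : Finset α), B ⊆ E → ∀ A ⊆ B, A.card + nF G B ≤ B.card + nF G A := by
  intro B
  induction B using Finset.strongInduction with
  | _ B ihB =>
    intro hBE A hAB
    by_cases he : A = B
    · subst he; omega
    · obtain ⟨b, hbB, hbA⟩ : ∃ b ∈ B, b ∉ A := by
        by_contra hc; push_neg at hc
        exact he (Finset.Subset.antisymm hAB hc)
      have hAB' : A ⊆ B.erase b := fun x hx =>
        Finset.mem_erase.mpr ⟨fun hc => hbA (hc ▸ hx), hAB hx⟩
      have hsub : B.erase b ⊂ B := Finset.erase_ssubset hbB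
      have hBE' : B.erase b ⊆ E := (Finset.erase_subset b B).trans hBE
      have ih := ihB (B.erase b) hsub hBE' A hAB'
      have hbE : b ∈ E := hBE hbB
      have hbeb : b ∉ B.erase b := Finset.notMem_erase b B
      have hins : insert b (B.erase b) = B := Finset.insert_erase hbB
      have h2 := (nF_insert_le hG hMCI hSG hbE hbeb hBE').2
      rw [hins] at h2
      have hcard : (B.erase b).card + 1 = B.card := Finset.card_erase_add_one hbB
      omega

/-- increasing differences -/
lemma nF_incdiff (hG : IsCIStructOn E G) (hMCI : MCIax E G) (hSG : SGax E G) :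
    ∀ (Y : Finset α), Y ⊆ E → ∀ X ⊆ Y, ∀ a ∈ E, a ∉ Y →
      nF G (insert a X) + nF G Y ≤ nF G (insert a Y) + nF G X := by
  intro Y
  induction Y using Finset.strongInduction with
  | _ Y ihY =>
    intro hYE X hXY a haE haY
    by_cases he : X = Y
    · subst he; omega
    · obtain ⟨b, hbY, hbX⟩ : ∃ b ∈ Y, b ∉ X := by
        by_contra hc; push_neg at hc
        exact he (Finset.Subset.antisymm hXY hc)
      set Y' := Y.erase b with hY'
      have hXY' : X ⊆ Y' := fun x hx =>
        Finset.mem_erase.mpr ⟨fun hc => hbX (hc ▸ hx), hXY hx⟩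
      have hsub : Y' ⊂ Y := Finset.erase_ssubset hbY
      have hY'E : Y' ⊆ E := (Finset.erase_subset b Y).trans hYE
      have haY' : a ∉ Y' := fun hc => haY (Finset.mem_of_mem_erase hc)
      have ih := ihY Y' hsub hY'E X hXY' a haE haY'
      have hbE : b ∈ E := hYE hbY
      have hab : a ≠ b := fun hc => haY (hc ▸ hbY)
      have hwf : wfCI E a b Y' :=
        ⟨haE, hbE, hab, haY', Finset.notMem_erase b Y, hY'E⟩
      have hrec := nF_rec hG hMCI hSG hwf
      rw [Finset.insert_erase hbY] at hrec
      omega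

lemma nF_supermod (hG : IsCIStructOn E G) (hMCI : MCIax E G) (hSG : SGax E G) :
    ∀ (A : Finset α), A ⊆ E → ∀ B ⊆ E,
      nF G A + nF G B ≤ nF G (A ∪ B) + nF G (A ∩ B) := by
  intro A
  induction A using Finset.strongInduction with
  | _ A ihA =>
    intro hAE B hBE
    by_cases hAB : A ⊆ B
    · rw [Finset.union_eq_right.mpr hAB, Finset.inter_eq_left.mpr hAB]; omega
    · obtain ⟨a, haA, haB⟩ : ∃ a ∈ A, a ∉ B := by
        by_contra hc; push_neg at hc; exact hAB hc
      set A' := A.erase a with hA'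
      have hsub : A' ⊂ A := Finset.erase_ssubset haA
      have hA'E : A' ⊆ E := (Finset.erase_subset a A).trans hAE
      have ih := ihA A' hsub hA'E B hBE
      have hcap : A' ∩ B = A ∩ B := by
        ext x; simp only [Finset.mem_inter, hA', Finset.mem_erase]
        exact ⟨fun ⟨⟨_, h1⟩, h2⟩ => ⟨h1, h2⟩,
          fun ⟨h1, h2⟩ => ⟨⟨fun hc => haB (hc ▸ h2), h1⟩, h2⟩⟩
      have haA'B : a ∉ A' ∪ B := by
        simp [hA', Finset.mem_union, Finset.mem_erase, haB]
      have hid := nF_incdiff hG hMCI hSG (A' ∪ B)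
        (Finset.union_subset hA'E hBE) A' Finset.subset_union_left
        a (hAE haA) haA'B
      have h1 : insert a A' = A := Finset.insert_erase haA
      have h2 : insert a (A' ∪ B) = A ∪ B := by
        rw [← h1, Finset.insert_union]
      rw [h1, h2] at hid
      rw [hcap] at ih
      omega

end Aux4

/-- for a CI-structure satisfying (MCI) and (SG), the recursion
defines a unique function on subsets of `E`, which is the rank function of
a loopless matroid on `E`. -/
theorem rank_recursion_wellDefined {α : Type*} [DecidableEq α] (E : Finset α)
    (G : α → α → Finset α → Prop) (hG : IsCIStructOn E G)
    (hMCI : MCIax E G) (hSG : SGax E G) :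
    (∃ M : FinMatroid α, M.E = E ∧ M.Loopless ∧ RecSat E G M.r) ∧
      (∀ r₁ r₂ : Finset α → ℕ, RecSat E G r₁ → RecSat E G r₂ →
        ∀ S ⊆ E, r₁ S = r₂ S) := by
  constructor
  · -- existence
    set r : Finset α → ℕ := fun S => S.card - nF G S with hr
    have hrS : ∀ S, r S = S.card - nF G S := fun S => rfl
    refine ⟨⟨E, r, ?_, ?_, ?_, ?_⟩, rfl, ?_, ?_, ?_, ?_⟩
    · -- r_empty
      simp [hrS, nF_empty]
    · -- r_le_card
      intro A _; exact Nat.sub_le _ _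
    · -- r_mono
      intro A B hAB hBE
      have h1 := nF_mono2 hG hMCI hSG B hBE A hAB
      have h2 := nF_le_card hG hMCI hSG A (hAB.trans hBE)
      have h3 := nF_le_card hG hMCI hSG B hBE
      have h4 := Finset.card_le_card hAB
      simp only [hrS]; omega
    · -- r_submod
      intro A B hAE hBE
      have h1 := nF_supermod hG hMCI hSG A hAE B hBE
      have h2 := nF_le_card hG hMCI hSG A hAE
      have h3 := nF_le_card hG hMCI hSG B hBE
      have h4 := nF_le_card hG hMCI hSG (A ∪ B) (Finset.union_subset hAE hBE)
      have h5 := nF_le_card hG hMCI hSG (A ∩ B)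
        ((Finset.inter_subset_left).trans hAE)
      have h6 := Finset.card_union_add_card_inter A B
      have h7 := Finset.card_le_card (Finset.subset_union_left : A ⊆ A ∪ B)
      have h8 := Finset.card_le_card (Finset.inter_subset_left : A ∩ B ⊆ A)
      simp only [hrS]; omega
    · -- loopless
      intro e _
      simp [hrS, nF_singleton]
    · -- RecSat: empty
      simp [hrS, nF_empty]
    · -- RecSat: singletons
      intro i _
      simp [hrS, nF_singleton]
    · -- RecSat: recursion
      intro i j K hwf
      obtain ⟨hi, hj, hij, hiK, hjK, hKE⟩ := hwf
      have hrec := nF_rec hG hMCI hSG ⟨hi, hj, hij, hiK, hjK, hKE⟩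
      have hiJK : i ∉ insert j K := by simp [hij, hiK]
      have hcK := nF_le_card hG hMCI hSG K hKE
      have hciK : nF G (insert i K) ≤ K.card + 1 := by
        have := nF_le_card hG hMCI hSG (insert i K) (Finset.insert_subset hi hKE)
        rwa [Finset.card_insert_of_notMem hiK] at this
      have hcjK : nF G (insert j K) ≤ K.card + 1 := by
        have := nF_le_card hG hMCI hSG (insert j K) (Finset.insert_subset hj hKE)
        rwa [Finset.card_insert_of_notMem hjK] at this
      have hcijK : nF G (insert i (insert j K)) ≤ K.card + 2 := by
        have := nF_le_card hG hMCI hSG (insert i (insert j K))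
          (Finset.insert_subset hi (Finset.insert_subset hj hKE))
        rwa [Finset.card_insert_of_notMem hiJK,
          Finset.card_insert_of_notMem hjK] at this
      have e1 : (insert i (insert j K)).card = K.card + 2 := by
        rw [Finset.card_insert_of_notMem hiJK, Finset.card_insert_of_notMem hjK]
      have e2 : (insert i K).card = K.card + 1 := Finset.card_insert_of_notMem hiK
      have e3 : (insert j K).card = K.card + 1 := Finset.card_insert_of_notMem hjK
      constructor
      · intro hGij
        have h0 : fG G i j K = 0 := fG_of_pos hGij
        simp only [hrS]; omega
      · intro hGij
        have h0 : fG G i j K = 1 := fG_of_neg hGij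
        simp only [hrS]; omega
  · -- uniqueness
    intro r₁ r₂ h1 h2 S
    induction S using Finset.strongInduction with
    | _ S ih =>
      intro hSE
      rcases Finset.eq_empty_or_nonempty S with rfl | ⟨i, hiS⟩
      · rw [h1.1, h2.1]
      rcases Finset.eq_empty_or_nonempty (S.erase i) with he | ⟨j, hjS'⟩
      · have hSi : S = {i} := by
          apply Finset.Subset.antisymm
          · intro x hx
            by_contra hc
            have : x ∈ S.erase i := Finset.mem_erase.mpr
              ⟨fun h => hc (h ▸ Finset.mem_singleton_self i), hx⟩
            simp [he] at this
          · simp [hiS]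
        rw [hSi, h1.2.1 i (hSE hiS), h2.2.1 i (hSE hiS)]
      · have hji : j ≠ i := (Finset.mem_erase.mp hjS').1
        have hjS : j ∈ S := (Finset.mem_erase.mp hjS').2
        set K : Finset α := (S.erase i).erase j with hK
        have hjK : j ∉ K := Finset.notMem_erase j _
        have hiK : i ∉ K := fun hc =>
          Finset.notMem_erase i S (Finset.mem_of_mem_erase hc)
        have hKS : K ⊆ S := ((Finset.erase_subset j _).trans (Finset.erase_subset i S))
        have hKE : K ⊆ E := hKS.trans hSE
        have hjKS : insert j K = S.erase i := Finset.insert_erase hjS'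
        have hS : insert i (insert j K) = S := by
          rw [hjKS, Finset.insert_erase hiS]
        have hiKS : insert i K = S.erase j := by
          rw [hK, Finset.erase_right_comm]
          exact Finset.insert_erase (Finset.mem_erase.mpr ⟨hji.symm, hiS⟩)
        have hKss : K ⊂ S := (Finset.ssubset_iff_of_subset hKS).mpr ⟨i, hiS, hiK⟩
        have hiKss : insert i K ⊂ S := hiKS ▸ Finset.erase_ssubset hjS
        have hjKss : insert j K ⊂ S := hjKS ▸ Finset.erase_ssubset hiS
        have uK := ih K hKss hKE
        have uiK := ih (insert i K) hiKss (Finset.insert_subset (hSE hiS) hKE)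
        have ujK := ih (insert j K) hjKss (Finset.insert_subset (hSE hjS) hKE)
        have hwf : wfCI E i j K := ⟨hSE hiS, hSE hjS, fun hc => hji hc.symm, hiK, hjK, hKE⟩
        have e1 := h1.2.2 i j K hwf
        have e2 := h2.2.2 i j K hwf
        by_cases hGij : G i j K
        · have q1 := e1.1 hGij
          have q2 := e2.1 hGij
          rw [hS] at q1 q2
          omega
        · have q1 := e1.2 hGij
          have q2 := e2.2 hGij
          rw [hS] at q1 q2
          omega
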